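/- Let x, x', w ∈ ℝ^d and let k be an integer with ‖x − x'‖₀ ≤ k < d/2, where ‖·‖₀ counts nonzero coordinates. Let TSum_k(u) denote the sum of the coordinates of u after discarding the k largest and k smallest coordinates. Then |TSum_k(x') − Σ_{i=1}^d x_i| ≤ 8k ‖x‖_∞. -/

import Mathlib

open Finset

/-- Truncated sum: sort the coordinates of `u` and sum them after discarding the
`k` smallest and the `k` largest coordinates. -/
noncomputable def TSum {d : ℕ} (k : ℕ) (u : Fin d → ℝ) : ℝ :=
  (((((List.ofFn u).insertionSort (· ≤ ·)).drop k).take (d - 2 * k)).sum)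

lemma countP_ofFn' {d : ℕ} (u : Fin d → ℝ) (p : ℝ → Bool) :
    (List.ofFn u).countP p = (univ.filter (fun j => p (u j))).card := by
  rw [List.ofFn_eq_map, List.countP_map, Fin.univ_def]
  simp [Finset.filter, Finset.card, Multiset.filter_coe,
    List.countP_eq_length_filter, Function.comp_def]

lemma abs_list_sum_le (L : List ℝ) (M : ℝ) (h : ∀ b ∈ L, |b| ≤ M) :
    |L.sum| ≤ L.length * M := by
  induction L with
  | nil => simp
  | cons a L ih =>
    simp only [List.sum_cons, List.length_cons]
    calc |a + L.sum| ≤ |a| + |L.sum| := abs_add_le _ _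
      _ ≤ M + L.length * M := by
          gcongr
          · exact h a (by simp)
          · exact ih (fun b hb => h b (by simp [hb]))
      _ = (L.length + 1) * M := by ring
      _ = ((L.length + 1 : ℕ) : ℝ) * M := by push_cast; ring

lemma exists_of_card_filter {d k : ℕ} (x x' : Fin d → ℝ)
    (h0 : (univ.filter (fun i => x i ≠ x' i)).card ≤ k)
    (q : Fin d → Prop) [DecidablePred q]
    (hq : k + 1 ≤ (univ.filter q).card) : ∃ j, x j = x' j ∧ q j := by
  have hle := Finset.le_card_sdiff (univ.filter (fun i => x i ≠ x' i)) (univ.filter q)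
  have h1 : 0 < ((univ.filter q) \ (univ.filter fun i => x i ≠ x' i)).card := by omega
  obtain ⟨j, hj⟩ := Finset.card_pos.1 h1
  rw [Finset.mem_sdiff, Finset.mem_filter] at hj
  refine ⟨j, ?_, hj.1.2⟩
  have := hj.2
  simp only [Finset.mem_filter, Finset.mem_univ, true_and, not_not] at this
  exact this

theorem tsum_truncation_bound {d : ℕ} (k : ℕ) (x x' : Fin d → ℝ)
    (h0 : (Finset.univ.filter (fun i => x i ≠ x' i)).card ≤ k)
    (hk : 2 * k < d) :
    |TSum k x' - ∑ i, x i| ≤ 8 * k * (⨆ i, |x i|) := by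
  set M : ℝ := ⨆ i, |x i| with hMdef
  have hd : 0 < d := by omega
  have hM : ∀ i, |x i| ≤ M := fun i =>
    le_ciSup (f := fun i => |x i|) (Set.Finite.bddAbove (Set.finite_range _)) i
  have hM0 : 0 ≤ M := (abs_nonneg _).trans (hM ⟨0, hd⟩)
  set l : List ℝ := (List.ofFn x').insertionSort (fun a b => a ≤ b) with hl
  have hperm : List.Perm l (List.ofFn x') := List.perm_insertionSort _ _
  have hlen : l.length = d := by
    rw [hperm.length_eq, List.length_ofFn]
  have hsort : l.Pairwise (fun a b => a ≤ b) := List.pairwise_insertionSort _ _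
  set B : Finset (Fin d) := univ.filter (fun i => x i ≠ x' i) with hB
  set slice : List ℝ := (l.drop k).take (d - 2 * k) with hslice
  have hslice_drop : ∀ e ∈ slice, e ∈ l.drop k := fun e he => List.mem_of_mem_take he
  have hslice_take : ∀ e ∈ slice, e ∈ l.take (d - k) := by
    intro e he
    rw [hslice, List.take_drop] at he
    have hkk : k + (d - 2*k) = d - k := by omega
    rw [hkk] at he
    exact List.mem_of_mem_drop he
  -- key middle-element bound
  have hslice_mem : ∀ e ∈ slice, |e| ≤ M := by
    intro e he
    rw [abs_le]
    constructor
    · -- -M ≤ e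
      have hcard : k + 1 ≤ (univ.filter (fun j => x' j ≤ e)).card := by
        have h1 : (List.ofFn x').countP (fun t => decide (t ≤ e))
            = (univ.filter (fun j => x' j ≤ e)).card := by
          rw [countP_ofFn']; simp
        rw [← h1, ← hperm.countP_eq]
        have hsplitc : (l.take k).countP (fun t => decide (t ≤ e))
            + (l.drop k).countP (fun t => decide (t ≤ e))
            = l.countP (fun t => decide (t ≤ e)) := by
          rw [← List.countP_append, List.take_append_drop]
        rw [← hsplitc]
        have htake : (l.take k).countP (fun t => decide (t ≤ e)) = (l.take k).length :=
          List.countP_eq_length.2 (fun a ha => by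
            simp only [decide_eq_true_eq]
            exact hsort.rel_of_mem_take_of_mem_drop ha (hslice_drop e he))
        have hlen_take : (l.take k).length = k := by
          simp [List.length_take, hlen]; omega
        have hdrop : 0 < (l.drop k).countP (fun t => decide (t ≤ e)) := by
          rw [List.countP_pos_iff]
          exact ⟨e, hslice_drop e he, by simp⟩
        omega
      obtain ⟨j, hj1, hj2⟩ := exists_of_card_filter x x' h0 _ hcard
      calc -M ≤ -|x j| := by linarith [hM j]
        _ ≤ x j := neg_abs_le _
        _ = x' j := hj1
        _ ≤ e := hj2
    · -- e ≤ M
      have hcard : k + 1 ≤ (univ.filter (fun j => e ≤ x' j)).card := by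
        have h1 : (List.ofFn x').countP (fun t => decide (e ≤ t))
            = (univ.filter (fun j => e ≤ x' j)).card := by
          rw [countP_ofFn']; simp
        rw [← h1, ← hperm.countP_eq]
        have hsplitc : (l.take (d-k)).countP (fun t => decide (e ≤ t))
            + (l.drop (d-k)).countP (fun t => decide (e ≤ t))
            = l.countP (fun t => decide (e ≤ t)) := by
          rw [← List.countP_append, List.take_append_drop]
        rw [← hsplitc]
        have hdrop : (l.drop (d-k)).countP (fun t => decide (e ≤ t)) = (l.drop (d-k)).length :=
          List.countP_eq_length.2 (fun a ha => by
            simp only [decide_eq_true_eq]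
            exact hsort.rel_of_mem_take_of_mem_drop (hslice_take e he) ha)
        have hlen_drop : (l.drop (d-k)).length = k := by
          simp [List.length_drop, hlen]; omega
        have htake : 0 < (l.take (d-k)).countP (fun t => decide (e ≤ t)) := by
          rw [List.countP_pos_iff]
          exact ⟨e, hslice_take e he, by simp⟩
        omega
      obtain ⟨j, hj1, hj2⟩ := exists_of_card_filter x x' h0 _ hcard
      calc e ≤ x' j := hj2
        _ = x j := hj1.symm
        _ ≤ |x j| := le_abs_self _
        _ ≤ M := hM j
  -- the clip function
  set f : ℝ → ℝ := fun t => max (-M) (min M t) with hf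
  have hfmono : ∀ a b : ℝ, a ≤ b → f a ≤ f b := by
    intro a b hab
    exact max_le_max le_rfl (min_le_min le_rfl hab)
  have hfid : ∀ t : ℝ, |t| ≤ M → f t = t := by
    intro t ht
    rw [abs_le] at ht
    rw [hf]
    simp only
    rw [min_eq_right ht.2, max_eq_right ht.1]
  have hfbd : ∀ t : ℝ, |f t| ≤ M := by
    intro t
    rw [abs_le]
    constructor
    · exact le_max_left _ _
    · exact max_le (by linarith) (min_le_left _ _)
  set y : Fin d → ℝ := fun i => f (x' i) with hy
  set ly : List ℝ := (List.ofFn y).insertionSort (fun a b => a ≤ b) with hly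
  have hlyperm : List.Perm ly (List.ofFn y) := List.perm_insertionSort _ _
  have hofn : List.ofFn y = (List.ofFn x').map f := by
    rw [List.map_ofFn]
    rfl
  have hlyeq : ly = l.map f := by
    haveI : Std.Antisymm (fun a b : ℝ => a ≤ b) := ⟨fun _ _ => le_antisymm⟩
    refine (fun hp h1 h2 => List.Perm.eq_of_pairwise' (r := fun a b : ℝ => a ≤ b) h1 h2 hp) ?_ ?_ ?_
    · exact hlyperm.trans (hofn ▸ (hperm.map f).symm)
    · exact List.pairwise_insertionSort _ _
    · exact List.Pairwise.map f hfmono hsort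
  have hmapslice : slice.map f = slice := by
    calc slice.map f = slice.map id := List.map_congr_left
          (fun e he => hfid e (hslice_mem e he))
      _ = slice := List.map_id _
  have hTSeq : TSum k x' = slice.sum := rfl
  have hTSy : TSum k y = slice.sum := by
    show ((ly.drop k).take (d - 2*k)).sum = slice.sum
    rw [hlyeq, ← List.map_drop, ← List.map_take, ← hslice, hmapslice]
  -- bound 1: |TSum k y - ∑ y| ≤ 2kM
  have hly_bd : ∀ b ∈ ly, |b| ≤ M := by
    intro b hb
    rw [hlyeq] at hb
    obtain ⟨a, _, rfl⟩ := List.mem_map.1 hb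
    exact hfbd a
  have hlylen : ly.length = d := by rw [hlyperm.length_eq, List.length_ofFn]
  have hsumy : ∑ i, y i = ly.sum := by
    rw [← List.sum_ofFn, hlyperm.sum_eq]
  have hsplit1 : ly.sum = (ly.take k).sum + slice.sum + ((ly.drop k).drop (d - 2*k)).sum := by
    conv_lhs => rw [← List.take_append_drop k ly]
    rw [List.sum_append]
    conv_lhs => rw [← List.take_append_drop (d - 2*k) (ly.drop k)]
    rw [List.sum_append]
    have hsl : (ly.drop k).take (d - 2*k) = slice := by
      rw [hlyeq, ← List.map_drop, ← List.map_take, ← hslice, hmapslice]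
    rw [hsl]
    ring
  have hb1 : |TSum k y - ∑ i, y i| ≤ 2 * k * M := by
    rw [hTSy, hsumy, hsplit1]
    have h1 : |(ly.take k).sum| ≤ k * M := by
      calc |(ly.take k).sum| ≤ (ly.take k).length * M :=
            abs_list_sum_le _ _ (fun b hb => hly_bd b (List.mem_of_mem_take hb))
        _ ≤ k * M := by
            apply mul_le_mul_of_nonneg_right _ hM0
            have : (ly.take k).length ≤ k := by simp [List.length_take]
            exact_mod_cast this
    have h2 : |((ly.drop k).drop (d - 2*k)).sum| ≤ k * M := by
      calc |((ly.drop k).drop (d - 2*k)).sum| ≤ ((ly.drop k).drop (d - 2*k)).length * M :=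
            abs_list_sum_le _ _ (fun b hb => hly_bd b
              (List.mem_of_mem_drop (List.mem_of_mem_drop hb)))
        _ ≤ k * M := by
            apply mul_le_mul_of_nonneg_right _ hM0
            have : ((ly.drop k).drop (d - 2*k)).length ≤ k := by
              simp [List.length_drop, hlylen]; omega
            exact_mod_cast this
    have heq : slice.sum - ((ly.take k).sum + slice.sum + ((ly.drop k).drop (d - 2*k)).sum)
        = -((ly.take k).sum) - ((ly.drop k).drop (d - 2*k)).sum := by ring
    rw [heq]
    calc |-(ly.take k).sum - ((ly.drop k).drop (d - 2*k)).sum|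
        ≤ |(ly.take k).sum| + |((ly.drop k).drop (d - 2*k)).sum| := by
          rw [sub_eq_add_neg]
          calc _ ≤ |-(ly.take k).sum| + |-(((ly.drop k).drop (d - 2*k)).sum)| := abs_add_le _ _
            _ = _ := by rw [abs_neg, abs_neg]
      _ ≤ k * M + k * M := add_le_add h1 h2
      _ = 2 * k * M := by ring
  -- bound 2: |∑ y - ∑ x| ≤ 2kM
  have hb2 : |(∑ i, y i) - ∑ i, x i| ≤ 2 * k * M := by
    rw [← Finset.sum_sub_distrib]
    have hsub : ∑ i, (y i - x i) = ∑ i ∈ B, (y i - x i) := by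
      symm
      apply Finset.sum_subset (Finset.filter_subset _ _)
      intro i _ hi
      rw [Finset.mem_filter] at hi
      push_neg at hi
      have hxi : x i = x' i := hi (Finset.mem_univ i)
      have hyi : y i = x i := by
        rw [hy]
        simp only
        rw [← hxi, hfid _ (hM i)]
      rw [hyi, sub_self]
    rw [hsub]
    calc |∑ i ∈ B, (y i - x i)| ≤ ∑ i ∈ B, |y i - x i| := Finset.abs_sum_le_sum_abs _ _
      _ ≤ ∑ i ∈ B, (2 * M) := by
          apply Finset.sum_le_sum
          intro i _
          calc |y i - x i| ≤ |y i| + |x i| := abs_sub _ _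
            _ ≤ M + M := add_le_add (hfbd _) (hM i)
            _ = 2 * M := by ring
      _ = B.card * (2 * M) := by rw [Finset.sum_const, nsmul_eq_mul]
      _ ≤ k * (2 * M) := by
          apply mul_le_mul_of_nonneg_right _ (by linarith)
          exact_mod_cast h0
      _ = 2 * k * M := by ring
  -- combine
  have hTx : TSum k x' = TSum k y := by rw [hTSeq, hTSy]
  calc |TSum k x' - ∑ i, x i|
      = |(TSum k y - ∑ i, y i) + ((∑ i, y i) - ∑ i, x i)| := by rw [hTx]; ring_nf
    _ ≤ |TSum k y - ∑ i, y i| + |(∑ i, y i) - ∑ i, x i| := abs_add_le _ _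
    _ ≤ 2 * k * M + 2 * k * M := add_le_add hb1 hb2
    _ = 4 * k * M := by ring
    _ ≤ 8 * k * M := by nlinarith [hM0, (Nat.cast_nonneg k : (0:ℝ) ≤ k)]
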